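/- arXiv:2302.00232 — 2 statements merged into one kernel-verified Lean document; each statement's English description precedes it below -/
import Mathlib

section
/- Let n be a positive integer, V_u > 0 a real number, A an n×n real matrix, g ∈ ℝ^n, and (e[t])_{t≥1} a bounded sequence of vectors in ℝ^n. Define β[0] = 0 and β[t+1] = φ((t/(t+1))·(1/V_u)·A·β[t] + g) − e[t+1]/(t+1) for all t ≥ 0. Suppose there exists γ < 1 with ‖A‖₂ ≤ γ·V_u (so that β[t] converges to a limit β* satisfying β* = φ((1/V_u)·A·β* + g)), and suppose additionally there exists λ < 1 such that ‖A‖_∞ ≤ λ·V_u and ‖g‖_∞ ≤ 1 − λ. Then β* satisfies β* = (1/V_u)·A·β* + g; that is, β* is the unique solution of the linear system ((1/V_u)·A − I)·β + g = 0. -/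
open Filter Topology

/-- Euclidean norm of a vector in `ℝ^n`. -/
noncomputable def l2norm {n : ℕ} (x : Fin n → ℝ) : ℝ := Real.sqrt (∑ i, (x i) ^ 2)

/-- Operator norm of a matrix with respect to Euclidean norms, `‖A‖₂`. -/
noncomputable def l2OpNorm {m n : ℕ} (A : Matrix (Fin m) (Fin n) ℝ) : ℝ :=
  sInf {c : ℝ | 0 ≤ c ∧ ∀ x : Fin n → ℝ, l2norm (A.mulVec x) ≤ c * l2norm x}

/-- Sup norm `‖x‖_∞ = max_i |x_i|`. -/
noncomputable def supNorm {n : ℕ} (x : Fin n → ℝ) : ℝ := ⨆ i, |x i|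

/-- Operator norm of a matrix with respect to sup norms, `‖A‖_∞`. -/
noncomputable def supOpNorm {m n : ℕ} (A : Matrix (Fin m) (Fin n) ℝ) : ℝ :=
  sInf {c : ℝ | 0 ≤ c ∧ ∀ x : Fin n → ℝ, supNorm (A.mulVec x) ≤ c * supNorm x}

/-- Coordinatewise clamp `φ(x)_i = min(1, max(−1, x_i))`. -/
noncomputable def clamp1 {n : ℕ} (x : Fin n → ℝ) : Fin n → ℝ := fun i => min 1 (max (-1) (x i))

private lemma supNorm_eq_norm {n : ℕ} (hn : 0 < n) (x : Fin n → ℝ) : supNorm x = ‖x‖ := by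
  haveI : Nonempty (Fin n) := ⟨⟨0, hn⟩⟩
  have hle : ∀ i, |x i| ≤ supNorm x := fun i =>
    le_ciSup (Set.Finite.bddAbove (Set.finite_range (fun i => |x i|))) i
  apply le_antisymm
  · exact ciSup_le fun i => by simpa [Real.norm_eq_abs] using norm_le_pi_norm x i
  · have h0 : 0 ≤ supNorm x := le_trans (abs_nonneg _) (hle (Classical.arbitrary (Fin n)))
    rw [pi_norm_le_iff_of_nonneg h0]
    intro i
    simpa [Real.norm_eq_abs] using hle i

private lemma clamp1_coord_lip (a b : ℝ) :
    |min 1 (max (-1) a) - min 1 (max (-1) b)| ≤ |a - b| := by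
  calc |min 1 (max (-1) a) - min 1 (max (-1) b)|
      ≤ |(1:ℝ) - 1| ⊔ |max (-1) a - max (-1) b| := abs_min_sub_min_le_max _ _ _ _
    _ = |a ⊔ (-1) - b ⊔ (-1)| := by simp [max_comm]
    _ ≤ |a - b| := abs_max_sub_max_le_abs _ _ _

private lemma clamp1_lip {n : ℕ} (x y : Fin n → ℝ) :
    ‖clamp1 x - clamp1 y‖ ≤ ‖x - y‖ := by
  rw [pi_norm_le_iff_of_nonneg (norm_nonneg _)]
  intro i
  calc ‖(clamp1 x - clamp1 y) i‖ = |min 1 (max (-1) (x i)) - min 1 (max (-1) (y i))| := rfl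
    _ ≤ |x i - y i| := clamp1_coord_lip _ _
    _ = ‖(x - y) i‖ := rfl
    _ ≤ ‖x - y‖ := norm_le_pi_norm _ i

private lemma decay_aux (K : ℝ) (hK0 : 0 ≤ K) (hK1 : K < 1) (a u : ℕ → ℝ)
    (ha0 : ∀ t, 0 ≤ a t) (hu : Tendsto u atTop (𝓝 0))
    (hrec : ∀ t, a (t + 1) ≤ K * a t + u t) : Tendsto a atTop (𝓝 0) := by
  rw [Metric.tendsto_atTop]
  intro ε hε
  have h1K : 0 < 1 - K := by linarith
  obtain ⟨N, hN⟩ := (Metric.tendsto_atTop.mp hu) ((1 - K) * (ε / 2)) (by positivity)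
  have key : ∀ m, a (N + m) ≤ K ^ m * a N + ε / 2 := by
    intro m
    induction m with
    | zero => simp; linarith [ha0 N, hε]
    | succ m ih =>
      have h2 : u (N + m) ≤ (1 - K) * (ε / 2) := by
        have := hN (N + m) (Nat.le_add_right _ _)
        rw [Real.dist_eq, sub_zero] at this
        exact le_of_lt (lt_of_abs_lt this)
      calc a (N + (m + 1)) = a ((N + m) + 1) := by ring_nf
        _ ≤ K * a (N + m) + u (N + m) := hrec _
        _ ≤ K * (K ^ m * a N + ε / 2) + (1 - K) * (ε / 2) := by
            have := mul_le_mul_of_nonneg_left ih hK0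
            linarith
        _ = K ^ (m + 1) * a N + ε / 2 := by ring
  have hpow : Tendsto (fun m => K ^ m * a N) atTop (𝓝 0) := by
    simpa using (tendsto_pow_atTop_nhds_zero_of_lt_one hK0 hK1).mul_const (a N)
  obtain ⟨M, hM⟩ := (Metric.tendsto_atTop.mp hpow) (ε / 2) (by positivity)
  refine ⟨N + M, fun t ht => ?_⟩
  have htN : N ≤ t := le_trans (Nat.le_add_right _ _) ht
  have h3 := key (t - N)
  rw [Nat.add_sub_cancel' htN] at h3
  have h4 := hM (t - N) (by omega)
  rw [Real.dist_eq, sub_zero] at h4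
  have h5 : K ^ (t - N) * a N < ε / 2 := lt_of_abs_lt h4
  rw [Real.dist_eq, sub_zero, abs_of_nonneg (ha0 t)]
  linarith

theorem stmt1 (n : ℕ) (hn : 0 < n) (Vu : ℝ) (hVu : 0 < Vu)
    (A : Matrix (Fin n) (Fin n) ℝ) (g : Fin n → ℝ) (e : ℕ → Fin n → ℝ)
    (he : ∃ C : ℝ, ∀ t : ℕ, 1 ≤ t → l2norm (e t) ≤ C)
    (β : ℕ → Fin n → ℝ) (hβ0 : β 0 = 0)
    (hβ : ∀ t : ℕ, β (t + 1) =
      clamp1 (((t : ℝ) / ((t : ℝ) + 1)) • ((1 / Vu) • A.mulVec (β t)) + g)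
        - (1 / ((t : ℝ) + 1)) • e (t + 1))
    (hA2 : ∃ γ : ℝ, γ < 1 ∧ l2OpNorm A ≤ γ * Vu)
    (lam : ℝ) (hlam : lam < 1)
    (hAinf : supOpNorm A ≤ lam * Vu) (hginf : supNorm g ≤ 1 - lam) :
    ∃ βstar : Fin n → ℝ, Tendsto β atTop (𝓝 βstar) ∧
      βstar = clamp1 ((1 / Vu) • A.mulVec βstar + g) ∧
      βstar = (1 / Vu) • A.mulVec βstar + g ∧
      ∀ y : Fin n → ℝ, y = (1 / Vu) • A.mulVec y + g → y = βstar := by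
  haveI : Nonempty (Fin n) := ⟨⟨0, hn⟩⟩
  -- the defining set of supOpNorm
  set S : Set ℝ := {c : ℝ | 0 ≤ c ∧ ∀ x : Fin n → ℝ, supNorm (A.mulVec x) ≤ c * supNorm x}
    with hS
  -- S is nonempty
  have hSne : S.Nonempty := by
    set f := LinearMap.toContinuousLinearMap (Matrix.mulVecLin A)
    refine ⟨‖f‖, norm_nonneg _, fun x => ?_⟩
    rw [supNorm_eq_norm hn, supNorm_eq_norm hn]
    exact f.le_opNorm x
  have hSbdd : BddBelow S := ⟨0, fun c hc => hc.1⟩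
  have hSclosed : IsClosed S := by
    have : S = {c : ℝ | 0 ≤ c} ∩ ⋂ x : Fin n → ℝ,
        {c : ℝ | supNorm (A.mulVec x) ≤ c * supNorm x} := by
      ext c; simp [hS, Set.mem_iInter]
    rw [this]
    exact isClosed_Ici.inter (isClosed_iInter fun x =>
      isClosed_le continuous_const (continuous_id.mul continuous_const))
  have hmem : supOpNorm A ∈ S := IsClosed.csInf_mem hSclosed hSne hSbdd
  have hlam0 : 0 ≤ lam := by
    have h0 : 0 ≤ supOpNorm A := hmem.1
    nlinarith
  -- key bound in Pi norm
  have hbound : ∀ x : Fin n → ℝ, ‖(1 / Vu) • A.mulVec x‖ ≤ lam * ‖x‖ := by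
    intro x
    have h1 : supNorm (A.mulVec x) ≤ supOpNorm A * supNorm x := hmem.2 x
    have h2 : supOpNorm A * supNorm x ≤ lam * Vu * supNorm x := by
      have : 0 ≤ supNorm x := by rw [supNorm_eq_norm hn]; exact norm_nonneg _
      exact mul_le_mul_of_nonneg_right hAinf this
    simp only [supNorm_eq_norm hn] at h1 h2
    rw [norm_smul]
    have : ‖(1:ℝ) / Vu‖ = 1 / Vu := by
      rw [Real.norm_eq_abs, abs_of_pos (by positivity)]
    rw [this]
    calc 1 / Vu * ‖A.mulVec x‖ ≤ 1 / Vu * (lam * Vu * ‖x‖) := by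
          apply mul_le_mul_of_nonneg_left (le_trans h1 h2) (by positivity)
      _ = lam * ‖x‖ := by field_simp
  -- the contraction T
  set T : (Fin n → ℝ) → (Fin n → ℝ) := fun x => clamp1 ((1 / Vu) • A.mulVec x + g) with hT
  have hTlip : ∀ x y, ‖T x - T y‖ ≤ lam * ‖x - y‖ := by
    intro x y
    have h1 : ‖T x - T y‖ ≤ ‖((1 / Vu) • A.mulVec x + g) - ((1 / Vu) • A.mulVec y + g)‖ :=
      clamp1_lip _ _
    have h2 : ((1 / Vu) • A.mulVec x + g) - ((1 / Vu) • A.mulVec y + g)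
        = (1 / Vu) • A.mulVec (x - y) := by
      rw [Matrix.mulVec_sub, smul_sub]; abel
    rw [h2] at h1
    exact h1.trans (hbound _)
  have hcontr : ContractingWith ⟨lam, hlam0⟩ T := by
    constructor
    · exact_mod_cast hlam
    · apply LipschitzWith.of_dist_le_mul
      intro x y
      rw [dist_eq_norm, dist_eq_norm]
      exact_mod_cast hTlip x y
  set βstar := hcontr.fixedPoint T with hβstar
  have hfix : T βstar = βstar := hcontr.fixedPoint_isFixedPt
  -- βstar has sup norm ≤ 1
  have hβstar1 : ‖βstar‖ ≤ 1 := by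
    rw [← hfix, pi_norm_le_iff_of_nonneg zero_le_one]
    intro i
    rw [Real.norm_eq_abs, abs_le]
    constructor
    · exact le_min (by norm_num) (le_max_left _ _)
    · exact min_le_left _ _
  -- clamp is inactive at βstar
  have hg1 : ‖g‖ ≤ 1 - lam := by rw [← supNorm_eq_norm hn]; exact hginf
  have hinactive : clamp1 ((1 / Vu) • A.mulVec βstar + g) = (1 / Vu) • A.mulVec βstar + g := by
    have hz : ‖(1 / Vu) • A.mulVec βstar + g‖ ≤ 1 := by
      calc ‖(1 / Vu) • A.mulVec βstar + g‖ ≤ ‖(1 / Vu) • A.mulVec βstar‖ + ‖g‖ := norm_add_le _ _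
        _ ≤ lam * ‖βstar‖ + (1 - lam) := add_le_add (hbound _) hg1
        _ ≤ lam * 1 + (1 - lam) := by nlinarith
        _ = 1 := by ring
    funext i
    have hi : |((1 / Vu) • A.mulVec βstar + g) i| ≤ 1 := by
      have := norm_le_pi_norm ((1 / Vu) • A.mulVec βstar + g) i
      rw [Real.norm_eq_abs] at this
      exact this.trans hz
    rw [abs_le] at hi
    simp only [clamp1]
    rw [max_eq_right hi.1, min_eq_right hi.2]
  have hfix2 : βstar = (1 / Vu) • A.mulVec βstar + g := by
    conv_lhs => rw [← hfix]
    rw [hT]; exact hinactive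
  -- bound on errors
  obtain ⟨C, hC⟩ := he
  have heC : ∀ t : ℕ, 1 ≤ t → ‖e t‖ ≤ C := by
    intro t ht
    rw [pi_norm_le_iff_of_nonneg (le_trans (Real.sqrt_nonneg _) (hC t ht))]
    intro i
    refine le_trans ?_ (hC t ht)
    rw [Real.norm_eq_abs, ← Real.sqrt_sq_eq_abs]
    exact Real.sqrt_le_sqrt (Finset.single_le_sum (f := fun j => e t j ^ 2)
      (fun j _ => sq_nonneg _) (Finset.mem_univ i))
  -- convergence : a t := ‖β t - βstar‖ → 0
  have hconv : Tendsto (fun t => ‖β t - βstar‖) atTop (𝓝 0) := by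
    set D := lam * ‖βstar‖ + C with hD
    have hrec : ∀ t : ℕ, ‖β (t + 1) - βstar‖ ≤ lam * ‖β t - βstar‖ + D / ((t : ℝ) + 1) := by
      intro t
      have ht1 : (0:ℝ) < (t : ℝ) + 1 := by positivity
      set r : ℝ := (t : ℝ) / ((t : ℝ) + 1) with hr
      have hr0 : 0 ≤ r := by positivity
      have hr1 : r ≤ 1 := by rw [hr, div_le_one ht1]; linarith
      have hr2 : 1 - r = 1 / ((t : ℝ) + 1) := by rw [hr]; field_simp; ring
      have hb : βstar = clamp1 ((1 / Vu) • A.mulVec βstar + g) := by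
        conv_lhs => rw [← hfix]
      have step1 : β (t + 1) - βstar =
          (clamp1 (r • ((1 / Vu) • A.mulVec (β t)) + g) - clamp1 ((1 / Vu) • A.mulVec βstar + g))
          - (1 / ((t : ℝ) + 1)) • e (t + 1) := by
        conv_lhs => rw [hβ t, hb]
        exact sub_right_comm _ _ _
      have step2 : ‖β (t + 1) - βstar‖ ≤
          ‖(r • ((1 / Vu) • A.mulVec (β t)) + g) - ((1 / Vu) • A.mulVec βstar + g)‖
          + (1 / ((t : ℝ) + 1)) * ‖e (t + 1)‖ := by
        rw [step1]
        refine (norm_sub_le _ _).trans (add_le_add (clamp1_lip _ _) ?_)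
        rw [norm_smul, Real.norm_eq_abs, abs_of_pos (by positivity)]
      have step3 : (r • ((1 / Vu) • A.mulVec (β t)) + g) - ((1 / Vu) • A.mulVec βstar + g)
          = r • ((1 / Vu) • A.mulVec (β t - βstar)) - (1 - r) • ((1 / Vu) • A.mulVec βstar) := by
        rw [Matrix.mulVec_sub, smul_sub, smul_sub, sub_smul, one_smul]
        abel
      have step4 : ‖(r • ((1 / Vu) • A.mulVec (β t)) + g) - ((1 / Vu) • A.mulVec βstar + g)‖
          ≤ lam * ‖β t - βstar‖ + (1 / ((t : ℝ) + 1)) * (lam * ‖βstar‖) := by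
        rw [step3]
        refine (norm_sub_le _ _).trans (add_le_add ?_ ?_)
        · rw [norm_smul, Real.norm_eq_abs, abs_of_nonneg hr0]
          calc r * ‖(1 / Vu) • A.mulVec (β t - βstar)‖ ≤ 1 * (lam * ‖β t - βstar‖) :=
              mul_le_mul hr1 (hbound _) (norm_nonneg _) zero_le_one
            _ = lam * ‖β t - βstar‖ := one_mul _
        · rw [norm_smul, Real.norm_eq_abs, abs_of_nonneg (by linarith), hr2]
          exact mul_le_mul_of_nonneg_left (hbound _) (by positivity)
      have he1 : ‖e (t + 1)‖ ≤ C := heC (t + 1) (Nat.le_add_left _ _)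
      calc ‖β (t + 1) - βstar‖
          ≤ lam * ‖β t - βstar‖ + (1 / ((t : ℝ) + 1)) * (lam * ‖βstar‖)
            + (1 / ((t : ℝ) + 1)) * ‖e (t + 1)‖ := by linarith [step2, step4]
        _ ≤ lam * ‖β t - βstar‖ + D / ((t : ℝ) + 1) := by
            have : (1 / ((t : ℝ) + 1)) * ‖e (t + 1)‖ ≤ (1 / ((t : ℝ) + 1)) * C :=
              mul_le_mul_of_nonneg_left he1 (by positivity)
            rw [hD]
            rw [div_eq_mul_one_div (lam * ‖βstar‖ + C) ((t : ℝ) + 1)]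
            ring_nf
            ring_nf at this ⊢
            nlinarith [this]
    have hutend : Tendsto (fun t : ℕ => D / ((t : ℝ) + 1)) atTop (𝓝 0) := by
      apply Tendsto.div_atTop tendsto_const_nhds
      exact tendsto_atTop_add_const_right _ 1 tendsto_natCast_atTop_atTop
    exact decay_aux lam hlam0 hlam _ _ (fun t => norm_nonneg _) hutend hrec
  refine ⟨βstar, ?_, ?_, hfix2, ?_⟩
  · exact tendsto_iff_norm_sub_tendsto_zero.mpr hconv
  · conv_lhs => rw [← hfix]
  · intro y hy
    have h1 : y - βstar = (1 / Vu) • A.mulVec (y - βstar) := by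
      conv_lhs => rw [hy, hfix2]
      rw [Matrix.mulVec_sub, smul_sub]
      abel
    have h2 : ‖y - βstar‖ ≤ lam * ‖y - βstar‖ := by
      conv_lhs => rw [h1]
      exact hbound _
    have h3 : ‖y - βstar‖ = 0 := by nlinarith [norm_nonneg (y - βstar)]
    have := norm_eq_zero.mp h3
    rwa [sub_eq_zero] at this
end

section
/- Let N ≥ 2 and let n_1, …, n_N be positive integers, V_u > 0 a real number, g ∈ ℝ^{n_N}. Let A₁ be an n_N×n_1 real matrix and, for l = 2, …, N, let B_l be an n_{l−1}×n_l real matrix. Suppose vectors β^{l*} ∈ ℝ^{n_l} (l = 1, …, N) satisfy β^{N*} = φ((1/V_u)·A₁·β^{1*} + g) and β^{l*} = φ((1/V_u)·B_{l+1}·β^{(l+1)*}) for l = N−1, …, 1. If there exists λ < 1 such that ‖A₁‖_∞ ≤ λ·V_u, ‖B_l‖_∞ ≤ λ·V_u for l = 2, …, N, and ‖g‖_∞ ≤ 1 − λ^N, then all the clamps are inactive: β^{N*} = (1/V_u)^N·A₁·B₂·B₃·⋯·B_N·β^{N*} + g, i.e. β^{N*} solves the linear system ((1/V_u)^N·A₁·B₂·⋯·B_N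 − I)·β + g = 0, and for each l = 1, …, N−1, β^{l*} = (1/V_u)^{N−l}·B_{l+1}·B_{l+2}·⋯·B_N·β^{N*}. Moreover, if additionally ‖A₁‖₂·‖B_N‖₂·⋯·‖B₂‖₂ < V_u^N, then β^{N*} is the unique solution of that linear system. -/
/-- `prodFrom N n B l` is the matrix product `B_{l+1} ⬝ B_{l+2} ⬝ ⋯ ⬝ B_N`
(the identity matrix when `l = N`). -/
noncomputable def prodFrom (N : ℕ) (n : ℕ → ℕ)
    (B : (l : ℕ) → Matrix (Fin (n (l - 1))) (Fin (n l)) ℝ)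
    (l : ℕ) : Matrix (Fin (n l)) (Fin (n N)) ℝ :=
  if h : l < N then
    (B (l + 1)) * prodFrom N n B (l + 1)
  else
    Matrix.of fun i j => if (i : ℕ) = (j : ℕ) then (1 : ℝ) else 0
termination_by N - l
decreasing_by omega

lemma supNorm_le {n : ℕ} {x : Fin n → ℝ} {c : ℝ} (hc : 0 ≤ c) (h : ∀ i, |x i| ≤ c) :
    supNorm x ≤ c := by
  rcases isEmpty_or_nonempty (Fin n) with he | hne
  · simp [supNorm, Real.iSup_of_isEmpty, hc]
  · exact ciSup_le h

lemma abs_le_supNorm {n : ℕ} (x : Fin n → ℝ) (i : Fin n) : |x i| ≤ supNorm x :=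
  by unfold supNorm; exact le_ciSup (Set.Finite.bddAbove (Set.finite_range fun j => |x j|)) i

lemma supNorm_nonneg {n : ℕ} (x : Fin n → ℝ) : 0 ≤ supNorm x := by
  rcases isEmpty_or_nonempty (Fin n) with he | hne
  · simp [supNorm, Real.iSup_of_isEmpty]
  · exact le_trans (abs_nonneg _) (abs_le_supNorm x hne.some)

lemma supNorm_eq_zero {n : ℕ} {x : Fin n → ℝ} (h : supNorm x = 0) : x = 0 := by
  funext i
  have := abs_le_supNorm x i
  rw [h] at this
  simpa using le_antisymm this (abs_nonneg _)

lemma supNorm_zero {n : ℕ} : supNorm (0 : Fin n → ℝ) = 0 :=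
  le_antisymm (supNorm_le le_rfl (by simp)) (supNorm_nonneg _)

lemma supNorm_add_le {n : ℕ} (x y : Fin n → ℝ) : supNorm (x + y) ≤ supNorm x + supNorm y :=
  supNorm_le (add_nonneg (supNorm_nonneg x) (supNorm_nonneg y)) fun i =>
    le_trans (abs_add_le _ _) (add_le_add (abs_le_supNorm x i) (abs_le_supNorm y i))

lemma supNorm_smul {n : ℕ} (c : ℝ) (x : Fin n → ℝ) : supNorm (c • x) ≤ |c| * supNorm x :=
  supNorm_le (mul_nonneg (abs_nonneg c) (supNorm_nonneg x)) fun i => by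
    rw [Pi.smul_apply, smul_eq_mul, abs_mul]
    exact mul_le_mul_of_nonneg_left (abs_le_supNorm x i) (abs_nonneg c)

lemma supOpNorm_set_nonempty {m n : ℕ} (A : Matrix (Fin m) (Fin n) ℝ) :
    {c : ℝ | 0 ≤ c ∧ ∀ x : Fin n → ℝ, supNorm (A.mulVec x) ≤ c * supNorm x}.Nonempty := by
  refine ⟨∑ i, ∑ j, |A i j|, Finset.sum_nonneg fun i _ => Finset.sum_nonneg fun j _ => abs_nonneg _, fun x => ?_⟩
  refine supNorm_le (mul_nonneg (Finset.sum_nonneg fun i _ => Finset.sum_nonneg fun j _ => abs_nonneg _) (supNorm_nonneg x)) fun i => ?_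
  calc |A.mulVec x i| = |∑ j, A i j * x j| := rfl
    _ ≤ ∑ j, |A i j * x j| := Finset.abs_sum_le_sum_abs (fun j => A i j * x j) Finset.univ
    _ ≤ ∑ j, |A i j| * supNorm x := by
        refine Finset.sum_le_sum fun j _ => ?_
        rw [abs_mul]
        exact mul_le_mul_of_nonneg_left (abs_le_supNorm x j) (abs_nonneg _)
    _ = (∑ j, |A i j|) * supNorm x := (Finset.sum_mul _ _ _).symm
    _ ≤ (∑ i, ∑ j, |A i j|) * supNorm x := by
        refine mul_le_mul_of_nonneg_right ?_ (supNorm_nonneg x)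
        exact Finset.single_le_sum (f := fun i => ∑ j, |A i j|) (fun i _ => Finset.sum_nonneg fun j _ => abs_nonneg _) (Finset.mem_univ i)

lemma supOpNorm_nonneg {m n : ℕ} (A : Matrix (Fin m) (Fin n) ℝ) : 0 ≤ supOpNorm A :=
  le_csInf (supOpNorm_set_nonempty A) fun c hc => hc.1

lemma supNorm_mulVec_le {m n : ℕ} (A : Matrix (Fin m) (Fin n) ℝ) (x : Fin n → ℝ) :
    supNorm (A.mulVec x) ≤ supOpNorm A * supNorm x := by
  rcases eq_or_lt_of_le (supNorm_nonneg x) with h0 | h0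
  · have hx : x = 0 := supNorm_eq_zero h0.symm
    subst hx
    rw [Matrix.mulVec_zero, supNorm_zero, supNorm_zero, mul_zero]
  · rw [← div_le_iff₀ h0]
    refine le_csInf (supOpNorm_set_nonempty A) fun c hc => ?_
    rw [div_le_iff₀ h0]
    exact hc.2 x

lemma l2norm_nonneg {n : ℕ} (x : Fin n → ℝ) : 0 ≤ l2norm x := Real.sqrt_nonneg _

lemma l2norm_eq_zero {n : ℕ} {x : Fin n → ℝ} (h : l2norm x = 0) : x = 0 := by
  have hs : ∑ i, (x i) ^ 2 = 0 := by
    have h1 : ∑ i, (x i) ^ 2 ≤ 0 := Real.sqrt_eq_zero'.mp h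
    exact le_antisymm h1 (Finset.sum_nonneg fun i _ => sq_nonneg _)
  funext i
  have := (Finset.sum_eq_zero_iff_of_nonneg (fun i _ => sq_nonneg (x i))).mp hs i (Finset.mem_univ i)
  simpa using pow_eq_zero_iff (n := 2) (by norm_num) |>.mp this

lemma l2norm_zero {n : ℕ} : l2norm (0 : Fin n → ℝ) = 0 := by simp [l2norm]

lemma l2OpNorm_set_nonempty {m n : ℕ} (A : Matrix (Fin m) (Fin n) ℝ) :
    {c : ℝ | 0 ≤ c ∧ ∀ x : Fin n → ℝ, l2norm (A.mulVec x) ≤ c * l2norm x}.Nonempty := by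
  refine ⟨Real.sqrt (∑ i, ∑ j, (A i j) ^ 2), Real.sqrt_nonneg _, fun x => ?_⟩
  rw [l2norm, l2norm, ← Real.sqrt_mul (show (0:ℝ) ≤ ∑ i, ∑ j, (A i j) ^ 2 from Finset.sum_nonneg fun i _ => Finset.sum_nonneg fun j _ => sq_nonneg _)]
  refine Real.sqrt_le_sqrt ?_
  rw [Finset.sum_mul]
  refine Finset.sum_le_sum fun i _ => ?_
  calc (A.mulVec x i) ^ 2 = (∑ j, A i j * x j) ^ 2 := rfl
    _ ≤ (∑ j, (A i j) ^ 2) * ∑ j, (x j) ^ 2 := Finset.sum_mul_sq_le_sq_mul_sq _ _ _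

lemma l2OpNorm_nonneg {m n : ℕ} (A : Matrix (Fin m) (Fin n) ℝ) : 0 ≤ l2OpNorm A :=
  le_csInf (l2OpNorm_set_nonempty A) fun c hc => hc.1

lemma l2norm_mulVec_le {m n : ℕ} (A : Matrix (Fin m) (Fin n) ℝ) (x : Fin n → ℝ) :
    l2norm (A.mulVec x) ≤ l2OpNorm A * l2norm x := by
  rcases eq_or_lt_of_le (l2norm_nonneg x) with h0 | h0
  · have hx : x = 0 := l2norm_eq_zero h0.symm
    subst hx
    rw [Matrix.mulVec_zero, l2norm_zero, l2norm_zero, mul_zero]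
  · rw [← div_le_iff₀ h0]
    refine le_csInf (l2OpNorm_set_nonempty A) fun c hc => ?_
    rw [div_le_iff₀ h0]
    exact hc.2 x

lemma l2OpNorm_le {m n : ℕ} (A : Matrix (Fin m) (Fin n) ℝ) {c : ℝ} (hc : 0 ≤ c)
    (h : ∀ x, l2norm (A.mulVec x) ≤ c * l2norm x) : l2OpNorm A ≤ c :=
  csInf_le ⟨0, fun b hb => hb.1⟩ ⟨hc, h⟩

lemma l2OpNorm_mul_le {m n k : ℕ} (A : Matrix (Fin m) (Fin n) ℝ) (C : Matrix (Fin n) (Fin k) ℝ) :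
    l2OpNorm (A * C) ≤ l2OpNorm A * l2OpNorm C := by
  refine l2OpNorm_le _ (mul_nonneg (l2OpNorm_nonneg A) (l2OpNorm_nonneg C)) fun x => ?_
  rw [← Matrix.mulVec_mulVec]
  calc l2norm (A.mulVec (C.mulVec x)) ≤ l2OpNorm A * l2norm (C.mulVec x) := l2norm_mulVec_le A _
    _ ≤ l2OpNorm A * (l2OpNorm C * l2norm x) :=
        mul_le_mul_of_nonneg_left (l2norm_mulVec_le C x) (l2OpNorm_nonneg A)
    _ = l2OpNorm A * l2OpNorm C * l2norm x := (mul_assoc _ _ _).symm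

lemma clamp1_eq_self {n : ℕ} {x : Fin n → ℝ} (h : ∀ i, |x i| ≤ 1) : clamp1 x = x := by
  funext i
  have := abs_le.mp (h i)
  simp only [clamp1]
  rw [max_eq_right this.1, min_eq_right this.2]

lemma supNorm_clamp1_le_one {n : ℕ} (x : Fin n → ℝ) : supNorm (clamp1 x) ≤ 1 := by
  refine supNorm_le zero_le_one fun i => abs_le.mpr ⟨?_, min_le_left _ _⟩
  exact le_min (by norm_num) (le_max_left _ _)

lemma prodFrom_of_lt {N : ℕ} {n : ℕ → ℕ} {B : (l : ℕ) → Matrix (Fin (n (l - 1))) (Fin (n l)) ℝ}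
    {l : ℕ} (h : l < N) : prodFrom N n B l = (B (l + 1)) * prodFrom N n B (l + 1) := by
  rw [prodFrom, dif_pos h]

lemma prodFrom_self {N : ℕ} {n : ℕ → ℕ} {B : (l : ℕ) → Matrix (Fin (n (l - 1))) (Fin (n l)) ℝ} :
    prodFrom N n B N = (1 : Matrix (Fin (n N)) (Fin (n N)) ℝ) := by
  rw [prodFrom, dif_neg (lt_irrefl N)]
  ext i j
  simp only [Matrix.of_apply, Matrix.one_apply, Fin.val_eq_val]

lemma l2OpNorm_one_le {k : ℕ} : l2OpNorm (1 : Matrix (Fin k) (Fin k) ℝ) ≤ 1 :=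
  l2OpNorm_le _ zero_le_one fun x => by rw [Matrix.one_mulVec, one_mul]

lemma l2OpNorm_prodFrom_le {N : ℕ} {n : ℕ → ℕ}
    {B : (l : ℕ) → Matrix (Fin (n (l - 1))) (Fin (n l)) ℝ} :
    ∀ k l, l + k = N → l2OpNorm (prodFrom N n B l) ≤ ∏ j ∈ Finset.Icc (l + 1) N, l2OpNorm (B j) := by
  intro k
  induction k with
  | zero =>
    intro l hl
    have : l = N := by omega
    subst this
    rw [prodFrom_self, Finset.Icc_eq_empty (by omega), Finset.prod_empty]
    exact l2OpNorm_one_le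
  | succ k ih =>
    intro l hl
    have hlN : l < N := by omega
    rw [prodFrom_of_lt hlN]
    have hins : insert (l + 1) (Finset.Icc (l + 2) N) = Finset.Icc (l + 1) N := by
      ext x; simp only [Finset.mem_insert, Finset.mem_Icc]; omega
    rw [← hins, Finset.prod_insert (by simp only [Finset.mem_Icc]; omega)]
    calc l2OpNorm (B (l + 1) * prodFrom N n B (l + 1))
        ≤ l2OpNorm (B (l + 1)) * l2OpNorm (prodFrom N n B (l + 1)) := l2OpNorm_mul_le _ _
      _ ≤ l2OpNorm (B (l + 1)) * ∏ j ∈ Finset.Icc (l + 2) N, l2OpNorm (B j) :=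
          mul_le_mul_of_nonneg_left (ih (l + 1) (by omega)) (l2OpNorm_nonneg _)

lemma l2norm_smul {n : ℕ} (c : ℝ) (x : Fin n → ℝ) : l2norm (c • x) = |c| * l2norm x := by
  simp only [l2norm, Pi.smul_apply, smul_eq_mul, mul_pow]
  rw [← Finset.mul_sum, Real.sqrt_mul (sq_nonneg c), Real.sqrt_sq_eq_abs]

theorem stmt3 (N : ℕ) (hN : 2 ≤ N) (n : ℕ → ℕ) (hn : ∀ l, 1 ≤ l → l ≤ N → 0 < n l)
    (Vu : ℝ) (hVu : 0 < Vu)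
    (A1 : Matrix (Fin (n N)) (Fin (n 1)) ℝ)
    (B : (l : ℕ) → Matrix (Fin (n (l - 1))) (Fin (n l)) ℝ)
    (g : Fin (n N) → ℝ)
    (βstar : (l : ℕ) → Fin (n l) → ℝ)
    (hfixN : βstar N = clamp1 ((1 / Vu) • A1.mulVec (βstar 1) + g))
    (hfixl : ∀ l, 1 ≤ l → l ≤ N - 1 →
      βstar l = (clamp1 ((1 / Vu) • (B (l + 1)).mulVec (βstar (l + 1))) : Fin (n l) → ℝ))
    (lam : ℝ) (hlam : lam < 1)
    (hA1 : supOpNorm A1 ≤ lam * Vu)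
    (hB : ∀ l, 2 ≤ l → l ≤ N → supOpNorm (B l) ≤ lam * Vu)
    (hg : supNorm g ≤ 1 - lam ^ N) :
    (βstar N = (1 / Vu) ^ N • (A1 * prodFrom N n B 1).mulVec (βstar N) + g) ∧
    (∀ l, 1 ≤ l → l ≤ N - 1 →
      βstar l = (1 / Vu) ^ (N - l) • (prodFrom N n B l).mulVec (βstar N)) ∧
    (l2OpNorm A1 * ∏ l ∈ Finset.Icc 2 N, l2OpNorm (B l) < Vu ^ N →
      ∀ y : Fin (n N) → ℝ,
        y = (1 / Vu) ^ N • (A1 * prodFrom N n B 1).mulVec y + g → y = βstar N) := by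
  have hVu' : (0:ℝ) < 1 / Vu := by positivity
  have hlam0 : 0 ≤ lam := by nlinarith [supOpNorm_nonneg A1]
  -- key induction: norm bounds and clamp-free recursion
  have key : ∀ k l, l + k = N → 1 ≤ l →
      supNorm (βstar l) ≤ lam ^ k ∧
      (l + 1 ≤ N → βstar l = (1 / Vu) • (B (l + 1)).mulVec (βstar (l + 1))) := by
    intro k
    induction k with
    | zero =>
      intro l hl _
      have : l = N := by omega
      subst this
      refine ⟨?_, fun h => absurd h (by omega)⟩
      rw [hfixN, pow_zero]
      exact supNorm_clamp1_le_one _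
    | succ k ih =>
      intro l hl hl1
      have hlN : l < N := by omega
      have IH := ih (l + 1) (by omega) (by omega)
      have h1 : supNorm ((B (l + 1)).mulVec (βstar (l + 1))) ≤ (lam * Vu) * lam ^ k :=
        le_trans (supNorm_mulVec_le _ _)
          (mul_le_mul (hB (l + 1) (by omega) (by omega)) IH.1 (supNorm_nonneg _)
            (mul_nonneg hlam0 hVu.le))
      have h2 : supNorm ((1 / Vu) • (B (l + 1)).mulVec (βstar (l + 1))) ≤ lam ^ (k + 1) := by
        calc supNorm ((1 / Vu) • (B (l + 1)).mulVec (βstar (l + 1)))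
            ≤ |1 / Vu| * supNorm ((B (l + 1)).mulVec (βstar (l + 1))) := supNorm_smul _ _
          _ ≤ (1 / Vu) * ((lam * Vu) * lam ^ k) := by
              rw [abs_of_pos hVu']
              exact mul_le_mul_of_nonneg_left h1 hVu'.le
          _ = lam ^ (k + 1) := by field_simp; ring
      have heq : βstar l = (1 / Vu) • (B (l + 1)).mulVec (βstar (l + 1)) := by
        rw [hfixl l hl1 (by omega)]
        exact clamp1_eq_self fun i =>
          le_trans (abs_le_supNorm _ i) (le_trans h2 (pow_le_one₀ hlam0 hlam.le))
      exact ⟨heq ▸ h2, fun _ => heq⟩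
  -- chain representation
  have hrel : ∀ k l, l + k = N → 1 ≤ l →
      βstar l = (1 / Vu) ^ k • (prodFrom N n B l).mulVec (βstar N) := by
    intro k
    induction k with
    | zero =>
      intro l hl _
      have : l = N := by omega
      subst this
      rw [prodFrom_self, pow_zero, one_smul, Matrix.one_mulVec]
    | succ k ih =>
      intro l hl hl1
      have hlN : l < N := by omega
      calc βstar l = (1 / Vu) • (B (l + 1)).mulVec (βstar (l + 1)) :=
            (key (k + 1) l hl hl1).2 (by omega)
        _ = (1 / Vu) • (B (l + 1)).mulVec
              ((1 / Vu) ^ k • (prodFrom N n B (l + 1)).mulVec (βstar N)) := by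
            rw [← ih (l + 1) (by omega) (by omega)]
        _ = (1 / Vu) • ((1 / Vu) ^ k •
              (B (l + 1)).mulVec ((prodFrom N n B (l + 1)).mulVec (βstar N))) := by
            rw [Matrix.mulVec_smul]
        _ = (1 / Vu) ^ (k + 1) • (B (l + 1) * prodFrom N n B (l + 1)).mulVec (βstar N) := by
            rw [Matrix.mulVec_mulVec, smul_smul, ← pow_succ']
        _ = (1 / Vu) ^ (k + 1) • (prodFrom N n B l).mulVec (βstar N) := by
            rw [← prodFrom_of_lt hlN]
  -- layer N clamp removal
  have β1bound : supNorm (βstar 1) ≤ lam ^ (N - 1) := (key (N - 1) 1 (by omega) le_rfl).1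
  have hA : supNorm (A1.mulVec (βstar 1)) ≤ (lam * Vu) * lam ^ (N - 1) :=
    le_trans (supNorm_mulVec_le _ _)
      (mul_le_mul hA1 β1bound (supNorm_nonneg _) (mul_nonneg hlam0 hVu.le))
  have hlampow : lam * lam ^ (N - 1) = lam ^ N := by
    rw [← pow_succ']; congr 1; omega
  have hsmul : supNorm ((1 / Vu) • A1.mulVec (βstar 1)) ≤ lam ^ N := by
    calc supNorm ((1 / Vu) • A1.mulVec (βstar 1))
        ≤ |1 / Vu| * supNorm (A1.mulVec (βstar 1)) := supNorm_smul _ _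
      _ ≤ (1 / Vu) * ((lam * Vu) * lam ^ (N - 1)) := by
          rw [abs_of_pos hVu']
          exact mul_le_mul_of_nonneg_left hA hVu'.le
      _ = lam ^ N := by rw [← hlampow]; field_simp
  have hzN : supNorm ((1 / Vu) • A1.mulVec (βstar 1) + g) ≤ 1 :=
    le_trans (supNorm_add_le _ _) (by linarith)
  have heqN : βstar N = (1 / Vu) • A1.mulVec (βstar 1) + g := by
    rw [hfixN]
    exact clamp1_eq_self fun i => le_trans (abs_le_supNorm _ i) hzN
  have hβ1 : βstar 1 = (1 / Vu) ^ (N - 1) • (prodFrom N n B 1).mulVec (βstar N) :=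
    hrel (N - 1) 1 (by omega) le_rfl
  have conc1 : βstar N = (1 / Vu) ^ N • (A1 * prodFrom N n B 1).mulVec (βstar N) + g := by
    conv_lhs => rw [heqN, hβ1]
    congr 1
    rw [Matrix.mulVec_smul, smul_smul, Matrix.mulVec_mulVec]
    congr 1
    rw [← pow_succ']
    congr 1
    omega
  refine ⟨conc1, fun l hl1 hl2 => hrel (N - l) l (by omega) hl1, ?_⟩
  intro hlt y hy
  set M := A1 * prodFrom N n B 1 with hMdef
  set K := l2OpNorm A1 * ∏ l ∈ Finset.Icc 2 N, l2OpNorm (B l) with hKdef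
  have hK0 : 0 ≤ K := mul_nonneg (l2OpNorm_nonneg _)
    (Finset.prod_nonneg fun i _ => l2OpNorm_nonneg _)
  have hM : l2OpNorm M ≤ K :=
    le_trans (l2OpNorm_mul_le _ _)
      (mul_le_mul_of_nonneg_left (l2OpNorm_prodFrom_le (N - 1) 1 (by omega)) (l2OpNorm_nonneg _))
  have hdiff : y - βstar N = (1 / Vu) ^ N • M.mulVec (y - βstar N) := by
    conv_lhs => rw [hy, conc1]
    rw [Matrix.mulVec_sub, smul_sub]
    abel
  have hnormd : l2norm (y - βstar N) ≤ ((1 / Vu) ^ N * K) * l2norm (y - βstar N) := by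
    conv_lhs => rw [hdiff]
    rw [l2norm_smul, abs_of_pos (by positivity)]
    rw [mul_assoc]
    refine mul_le_mul_of_nonneg_left ?_ (by positivity)
    exact le_trans (l2norm_mulVec_le _ _)
      (mul_le_mul_of_nonneg_right hM (l2norm_nonneg _))
  have hc1 : (1 / Vu) ^ N * K < 1 := by
    rw [div_pow, one_pow, div_mul_eq_mul_div, div_lt_one (by positivity)]
    linarith
  have hd0 : l2norm (y - βstar N) = 0 := by
    nlinarith [l2norm_nonneg (y - βstar N)]
  have := l2norm_eq_zero hd0
  exact sub_eq_zero.mp this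
end
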